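/- For all k ≥ 2, every complete word over [k] has length at least k²/2 + 3k/2 − 2; that is, ρ(k) ≥ k²/2 + 3k/2 − 2. -/

import Mathlib

/-- Every injective listing of `S` is a sublist of `w`. -/
def CompleteOn (S : Finset ℕ) (w : List ℕ) : Prop :=
  ∀ l : List ℕ, l.Nodup → l.toFinset = S → l.Sublist w

lemma completeOn_mem {S : Finset ℕ} {w : List ℕ} (h : CompleteOn S w) {a : ℕ} (ha : a ∈ S) :
    a ∈ w := by
  have hl := h S.toList S.nodup_toList (by simp)
  exact hl.mem (by simpa using ha)

/-- latest first occurrence -/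
lemma exists_first (w : List ℕ) : ∀ (S : Finset ℕ), S.Nonempty → (∀ a ∈ S, a ∈ w) →
    ∃ a ∈ S, ∃ p s, w = p ++ a :: s ∧ a ∉ p ∧ ∀ b ∈ S, b ≠ a → b ∈ p := by
  induction w with
  | nil =>
    intro S hS hmem
    obtain ⟨a, ha⟩ := hS
    exact absurd (hmem a ha) (by simp)
  | cons c t ih =>
    intro S hS hmem
    by_cases hc : S = {c}
    · refine ⟨c, by simp [hc], [], t, by simp, by simp, ?_⟩
      intro b hb hbc
      exact absurd (by simpa [hc] using hb) hbc
    · have hne : (S.erase c).Nonempty := by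
        rcases Finset.eq_empty_or_nonempty (S.erase c) with h | h
        · exfalso
          apply hc
          apply Finset.eq_singleton_iff_nonempty_unique_mem.mpr
          refine ⟨hS, fun x hx => ?_⟩
          by_contra hxc
          exact absurd (Finset.mem_erase.mpr ⟨hxc, hx⟩) (by simp [h])
        · exact h
      have hmem' : ∀ a ∈ S.erase c, a ∈ t := by
        intro a ha
        have h1 := Finset.mem_erase.mp ha
        rcases List.mem_cons.mp (hmem a h1.2) with h | h
        · exact absurd h h1.1
        · exact h
      obtain ⟨a, haS, p, s, heq, hap, hforall⟩ := ih (S.erase c) hne hmem'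
      have hac : a ≠ c := (Finset.mem_erase.mp haS).1
      refine ⟨a, (Finset.mem_erase.mp haS).2, c :: p, s, by simp [heq], ?_, ?_⟩
      · simp only [List.mem_cons, not_or]
        exact ⟨hac, hap⟩
      · intro b hb hba
        by_cases hbc : b = c
        · simp [hbc]
        · exact List.mem_cons_of_mem _ (hforall b (Finset.mem_erase.mpr ⟨hbc, hb⟩) hba)

/-- earliest last occurrence -/
lemma exists_last (w : List ℕ) (S : Finset ℕ) (hS : S.Nonempty) (hmem : ∀ a ∈ S, a ∈ w) :
    ∃ a ∈ S, ∃ p s, w = p ++ a :: s ∧ a ∉ s ∧ ∀ b ∈ S, b ≠ a → b ∈ s := by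
  obtain ⟨a, haS, p, s, heq, hap, hforall⟩ := exists_first w.reverse S hS
    (fun a ha => List.mem_reverse.mpr (hmem a ha))
  refine ⟨a, haS, s.reverse, p.reverse, ?_, by simpa using hap,
    fun b hb hba => by simpa using hforall b hb hba⟩
  have : w = (p ++ a :: s).reverse := by rw [← heq, List.reverse_reverse]
  simp [this]

lemma snoc_sublist_cons {u s : List ℕ} {a : ℕ} (h : (u ++ [a]).Sublist (a :: s))
    (has : a ∉ s) : u = [] := by
  cases u with
  | nil => rfl
  | cons b v =>
    exfalso
    rcases List.sublist_cons_iff.mp h with h' | ⟨r, hr, hrs⟩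
    · exact has (h'.mem (by simp))
    · rw [List.cons_append] at hr
      have : v ++ [a] = r := by injection hr with _ h2
      exact has (hrs.mem (this ▸ by simp))

lemma prefix_complete {S : Finset ℕ} {w p s : List ℕ} {a : ℕ} (h : CompleteOn S w)
    (haS : a ∈ S) (heq : w = p ++ a :: s) (has : a ∉ s) :
    CompleteOn (S.erase a) p := by
  intro l hnd hfin
  have hal : a ∉ l := fun hmem =>
    Finset.notMem_erase a S (hfin ▸ List.mem_toFinset.mpr hmem)
  have hnd' : (l ++ [a]).Nodup := by
    simp [List.nodup_append, hnd, hal]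
    intro x hx hxa
    exact hal (hxa ▸ hx)
  have hfin' : (l ++ [a]).toFinset = S := by
    ext x
    simp only [List.mem_toFinset, List.mem_append, List.mem_singleton]
    constructor
    · rintro (hx | rfl)
      · exact Finset.mem_of_mem_erase (hfin ▸ List.mem_toFinset.mpr hx)
      · exact haS
    · intro hx
      by_cases hxa : x = a
      · exact Or.inr hxa
      · exact Or.inl (List.mem_toFinset.mp (hfin ▸ Finset.mem_erase.mpr ⟨hxa, hx⟩))
  have h1 : (l ++ [a]).Sublist (p ++ a :: s) := heq ▸ h _ hnd' hfin'
  obtain ⟨l1, l2, hl, h1p, h2s⟩ := List.sublist_append_iff.mp h1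
  rcases l2.eq_nil_or_concat with rfl | ⟨l2', b, rfl⟩
  · rw [List.append_nil] at hl
    exact (List.sublist_append_left l [a]).trans (hl ▸ h1p)
  · rw [List.concat_eq_append] at hl h2s
    rw [← List.append_assoc] at hl
    obtain ⟨hl1, hb⟩ := List.append_inj' hl rfl
    have hba : a = b := by injection hb
    subst hba
    have : l2' = [] := snoc_sublist_cons h2s has
    subst this
    simp only [List.append_nil] at hl1
    exact hl1 ▸ h1p

lemma suffix_complete {S : Finset ℕ} {w p s : List ℕ} {a : ℕ} (h : CompleteOn S w)
    (haS : a ∈ S) (heq : w = p ++ a :: s) (hap : a ∉ p) :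
    CompleteOn (S.erase a) s := by
  intro l hnd hfin
  have hal : a ∉ l := fun hmem =>
    Finset.notMem_erase a S (hfin ▸ List.mem_toFinset.mpr hmem)
  have hnd' : (a :: l).Nodup := by simp [hnd, hal]
  have hfin' : (a :: l).toFinset = S := by
    rw [List.toFinset_cons, hfin, Finset.insert_erase haS]
  have h1 : (a :: l).Sublist (p ++ a :: s) := heq ▸ h _ hnd' hfin'
  obtain ⟨l1, l2, hl, h1p, h2s⟩ := List.sublist_append_iff.mp h1
  have hl1 : l1 = [] := by
    cases l1 with
    | nil => rfl
    | cons b v =>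
      exfalso
      have hba : a = b := by injection hl
      subst hba
      exact hap (h1p.mem (by simp))
  subst hl1
  simp only [List.nil_append] at hl
  subst hl
  rcases List.sublist_cons_iff.mp h2s with h' | ⟨r, hr, hrs⟩
  · exact (List.sublist_cons_self a l).trans h'
  · have : l = r := by injection hr
    exact this ▸ hrs

lemma filter_complete {T : Finset ℕ} {p : List ℕ} (h : CompleteOn T p) :
    CompleteOn T (p.filter (· ∈ T)) := by
  intro l hnd hfin
  have h1 : l.filter (· ∈ T) = l := by
    apply List.filter_eq_self.mpr
    intro x hx
    simpa using hfin ▸ List.mem_toFinset.mpr hx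
  exact h1 ▸ (h l hnd hfin).filter (· ∈ T)

lemma main_bound : ∀ (n : ℕ) (S : Finset ℕ) (w : List ℕ), S.card = n → 2 ≤ n →
    CompleteOn S w → n ^ 2 + 3 * n ≤ 2 * w.length + 4 := by
  intro n
  induction n using Nat.strong_induction_on with
  | _ n ih =>
    intro S w hcard hn hc
    rcases eq_or_lt_of_le hn with h2 | h3
    · -- base case n = 2
      obtain ⟨a, b, hab, hS⟩ := Finset.card_eq_two.mp (hcard.trans h2.symm)
      have h1 : [a, b].Sublist w := hc [a, b] (by simp [hab]) (by simp [hS])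
      have h2' : [b, a].Sublist w := hc [b, a] (by simp [Ne.symm hab])
        (by simp [hS, Finset.pair_comm a b])
      have hlen : 3 ≤ w.length := by
        by_contra hlt
        push_neg at hlt
        have hle : 2 ≤ w.length := by simpa using h1.length_le
        have hw2 : w.length = 2 := by omega
        have e1 : [a, b] = w := h1.eq_of_length (by simp [hw2])
        have e2 : [b, a] = w := h2'.eq_of_length (by simp [hw2])
        rw [← e2] at e1
        exact hab (by injection e1)
      have : n = 2 := h2.symm
      subst this
      norm_num
      omega
    · -- inductive step n ≥ 3
      obtain ⟨m, rfl⟩ : ∃ m, n = m + 1 := ⟨n - 1, by omega⟩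
      have hSne : S.Nonempty := Finset.card_pos.mp (by omega)
      obtain ⟨a, haS, p, s, heq, has, hforall⟩ := exists_last w S hSne
        (fun x hx => completeOn_mem hc hx)
      set T := S.erase a with hT
      have hTcard : T.card = m := by rw [hT, Finset.card_erase_of_mem haS, hcard]; omega
      have hn1 : 2 ≤ m := by omega
      have hpc : CompleteOn T p := prefix_complete hc haS heq has
      -- s contains all letters of T
      have hsub : T ⊆ s.toFinset := by
        intro b hb
        have := Finset.mem_erase.mp hb
        exact List.mem_toFinset.mpr (hforall b this.2 this.1)
      have hslen : m ≤ s.length :=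
        hTcard ▸ (Finset.card_le_card hsub).trans s.toFinset_card_le
      have hwlen : w.length = p.length + 1 + s.length := by simp [heq]; omega
      by_cases hap : a ∈ p
      · -- case 1: a occurs in p
        have hfc : CompleteOn T (p.filter (· ∈ T)) := filter_complete hpc
        have hIH := ih m (by omega) T _ hTcard hn1 hfc
        have hsplit := List.length_eq_length_filter_add (l := p) (fun x => x ∈ T)
        have hone : 1 ≤ (p.filter (fun x => !(x ∈ T : Bool))).length := by
          have hmem2 : a ∈ p.filter (fun x => !(x ∈ T : Bool)) := by
            simp [List.mem_filter, hap, hT]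
          exact List.length_pos_iff.mpr (List.ne_nil_of_mem hmem2)
        have hplen : (p.filter (· ∈ T)).length + 1 ≤ p.length := by omega
        have hsq : (m + 1) ^ 2 = m ^ 2 + 2 * m + 1 := by ring
        linarith [hIH, hslen, hwlen, hplen]
      · -- case 2: a occurs only once
        have hsc : CompleteOn T s := suffix_complete hc haS heq hap
        have hIH1 := ih m (by omega) T _ hTcard hn1 hpc
        have hIH2 := ih m (by omega) T _ hTcard hn1 hsc
        have hsq : (m + 1) ^ 2 = m ^ 2 + 2 * m + 1 := by ring
        have hsqm : m ^ 2 = m * m := by ring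
        have hmm : 2 * m ≤ m * m := Nat.mul_le_mul_right m (by omega)
        linarith [hIH1, hIH2, hwlen]

/-- `w` is a complete word over the alphabet `{1,...,k}`. -/
def IsCompleteWord (k : ℕ) (w : List ℕ) : Prop :=
  (∀ x ∈ w, x ∈ Finset.Icc 1 k) ∧
  ∀ σ : Equiv.Perm (Fin k), (List.ofFn fun i => (σ i : ℕ) + 1).Sublist w

lemma bridge {k : ℕ} {w : List ℕ} (h : IsCompleteWord k w) :
    CompleteOn (Finset.Icc 1 k) w := by
  intro l hnd hfin
  have hlen : l.length = k := by
    rw [← List.toFinset_card_of_nodup hnd, hfin, Nat.card_Icc]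
    omega
  have hmem : ∀ x ∈ l, 1 ≤ x ∧ x ≤ k := by
    intro x hx
    have : x ∈ Finset.Icc 1 k := hfin ▸ List.mem_toFinset.mpr hx
    simpa using this
  have hmem' : ∀ j : Fin l.length, 1 ≤ l.get j ∧ l.get j ≤ k := by
    intro j
    exact hmem _ (by rw [List.get_eq_getElem]; exact l.getElem_mem j.isLt)
  have hget : ∀ i : Fin k, 1 ≤ l.get (Fin.cast hlen.symm i) ∧ l.get (Fin.cast hlen.symm i) ≤ k :=
    fun i => hmem' _
  set f : Fin k → Fin k := fun i => ⟨l.get (Fin.cast hlen.symm i) - 1, by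
    have h2 := (hget i).2; have h1 := (hget i).1; omega⟩ with hf
  have hinj : Function.Injective f := by
    intro i j hij
    have h1 := (hget i).1
    have h2 := (hget j).1
    have hv : l.get (Fin.cast hlen.symm i) - 1 = l.get (Fin.cast hlen.symm j) - 1 :=
      congrArg Fin.val hij
    have hgeq : l.get (Fin.cast hlen.symm i) = l.get (Fin.cast hlen.symm j) := by omega
    have := (List.nodup_iff_injective_get.mp hnd) hgeq
    exact Fin.cast_injective _ this
  let σ : Equiv.Perm (Fin k) := Equiv.ofBijective f (Finite.injective_iff_bijective.mp hinj)
  have hσ := h.2 σ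
  have heq : (List.ofFn fun i => (σ i : ℕ) + 1) = l := by
    apply List.ext_get (by simp [hlen])
    intro i h1 h2
    simp only [List.get_ofFn]
    have hcancel : l.get ⟨i, h2⟩ - 1 + 1 = l.get ⟨i, h2⟩ := by
      have := (hmem' ⟨i, h2⟩).1; omega
    rw [← hcancel]
    congr 1
  exact heq ▸ hσ

/-- For all k ≥ 2, every complete word over [k] has length at least k²/2 + 3k/2 − 2. -/
theorem complete_word_length_lower_bound (k : ℕ) (hk : 2 ≤ k) (w : List ℕ)
    (hw : IsCompleteWord k w) :
    ((k : ℚ) ^ 2 / 2 + 3 * k / 2 - 2) ≤ (w.length : ℚ) := by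
  have hc : CompleteOn (Finset.Icc 1 k) w := bridge hw
  have hcard : (Finset.Icc 1 k).card = k := by rw [Nat.card_Icc]; omega
  have hmain := main_bound k (Finset.Icc 1 k) w hcard hk hc
  have hq : (k : ℚ) ^ 2 + 3 * k ≤ 2 * w.length + 4 := by exact_mod_cast hmain
  linarith
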